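/- Let Δ, Γ ≥ 0 and define δ₋ = 1 - √((1/2)(1 - Δ/2 + √(1 - (Δ + 4Γ²)))) and β(Δ,Γ) = (Δ/4)·(1-δ₋)⁻² + Γ²(1-δ₋)⁻³ / √(1 - Γ²/(1-δ₋)²). If Δ + 4Γ² = 1 (with the expressions interpreted via the limit 1-δ₋ = √((1-Δ/2)/2)), then β(Δ,Γ) = 1. -/

import Mathlib

open Real

/-- On the boundary curve `Δ + 4Γ² = 1`, the contraction-rate bound satisfies
`β(Δ,Γ) = 1`, where `1 - δ₋ = √((1 - Δ/2)/2)`. -/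
theorem stmt_14 (Δ Γ : ℝ) (hΔ : 0 ≤ Δ) (hΓ : 0 ≤ Γ) (h : Δ + 4 * Γ ^ 2 = 1) :
    let δm := 1 - Real.sqrt ((1 - Δ / 2) / 2)
    (Δ / 4) * (1 - δm)⁻¹ ^ 2 +
        Γ ^ 2 * (1 - δm)⁻¹ ^ 3 / Real.sqrt (1 - Γ ^ 2 / (1 - δm) ^ 2) = 1 := by
  intro δm
  have hΓ2 : Γ ^ 2 = (1 - Δ) / 4 := by nlinarith
  have hΔ1 : Δ ≤ 1 := by nlinarith [sq_nonneg Γ]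
  have harg : (0:ℝ) < (1 - Δ / 2) / 2 := by linarith
  set s := Real.sqrt ((1 - Δ / 2) / 2) with hs
  have hspos : 0 < s := Real.sqrt_pos.mpr harg
  have hs2 : s ^ 2 = (1 - Δ / 2) / 2 := Real.sq_sqrt harg.le
  have hδ : 1 - δm = s := by simp only [δm, hs]; ring
  rw [hδ]
  have h2Δ : (2:ℝ) - Δ ≠ 0 := by linarith
  have hinner : 1 - Γ ^ 2 / s ^ 2 = 1 / (4 * s ^ 2) := by
    rw [hΓ2, hs2]; field_simp; ring
  rw [hinner]
  have hsq : Real.sqrt (1 / (4 * s ^ 2)) = 1 / (2 * s) := by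
    rw [show (1:ℝ) / (4 * s ^ 2) = (1 / (2 * s)) ^ 2 by field_simp; ring]
    exact Real.sqrt_sq (by positivity)
  rw [hsq]
  have h4 : 4 * s ^ 2 = 2 - Δ := by rw [hs2]; ring
  field_simp
  linear_combination 8 * hΓ2 - 4 * hs2
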